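/- (Martinian–Sundberg converse) Let B and T be positive integers and suppose there exist a finite field F, positive integers k ≥ 1 and n, a (k,n) streaming encoder, and a delay-T decoder that together correct every erasure pattern in which, within every window of T+1 consecutive time indices, the erased indices are contained in a single interval of at most B consecutive integers. Then the rate R = k/n satisfies B ≤ T·min(1, (1−R)/R); equivalently, both R·B ≤ (1−R)·T and B ≤ T hold. -/

import Mathlib

open scoped Classical

/-- A `(k,n)` streaming encoder over `F`: at each time `i` it maps the source symbols
`s[0], …, s[i]` to a channel symbol in `Fⁿ`. -/
def Encoder (F : Type) (k n : ℕ) : Type :=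
  (i : ℕ) → (Fin (i + 1) → (Fin k → F)) → (Fin n → F)

/-- The channel input `x[i]` produced by the encoder `f` from the source sequence `s`. -/
def chInput {F : Type} {k n : ℕ} (f : Encoder F k n) (s : ℕ → Fin k → F) (i : ℕ) :
    Fin n → F :=
  f i (fun t => s t)

/-- The channel output under erasure pattern `E`: `none` (the erasure symbol `⋆`) at erased
positions, `some x[i]` otherwise. -/
noncomputable def chOutput {F : Type} {k n : ℕ} (f : Encoder F k n) (E : Set ℕ)
    (s : ℕ → Fin k → F) (i : ℕ) : Option (Fin n → F) :=
  if i ∈ E then none else some (chInput f s i)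

/-- A delay-`T` decoder family: at time `i + T` it maps `y[0], …, y[i+T]` to a source symbol. -/
def Decoder (F : Type) (k n T : ℕ) : Type :=
  (i : ℕ) → (Fin (i + T + 1) → Option (Fin n → F)) → (Fin k → F)

/-- The code `(f, g)` corrects the erasure pattern `E` with delay `T`: for every source
sequence, each `s[i]` is reproduced from `y[0], …, y[i+T]`. -/
def Corrects {F : Type} {k n T : ℕ} (f : Encoder F k n) (g : Decoder F k n T)
    (E : Set ℕ) : Prop :=
  ∀ (s : ℕ → Fin k → F) (i : ℕ), g i (fun t => chOutput f E s t) = s i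

/-- The burst-erasure channel: in every window of `T + 1` consecutive indices, the erased
indices are contained in a single interval of at most `B` consecutive integers. -/
def BurstChannel (B T : ℕ) : Set (Set ℕ) :=
  {E | ∀ j : ℕ, ∃ b : ℕ, E ∩ Set.Icc j (j + T) ⊆ Set.Ico b (b + B)}

/-- Euclidean uniqueness helpers. -/
lemma eu_div (T q r : ℕ) (hT : 0 < T) (hr : r < T) : (q * T + r) / T = q := by
  rw [mul_comm, Nat.mul_add_div hT, Nat.div_eq_of_lt hr, add_zero]

lemma eu_mod (T q r : ℕ) (hr : r < T) : (q * T + r) % T = r := by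
  rw [mul_comm, Nat.mul_add_mod, Nat.mod_eq_of_lt hr]

/-- Two indices in a common window of length `T+1`, both lying in bursts
(residue mod `B+T` less than `B`), lie in the same burst. -/
lemma same_burst {B T : ℕ} {j t1 t2 : ℕ}
    (h1 : t1 % (B + T) < B) (h2 : t2 % (B + T) < B)
    (hw1 : j ≤ t1) (hw1' : t1 ≤ j + T) (hw2 : j ≤ t2) (hw2' : t2 ≤ j + T) :
    t1 / (B + T) = t2 / (B + T) := by
  set L := B + T with hLdef
  have hL : 0 < L := by omega
  have key : ∀ a b : ℕ, a ≤ b → b ≤ a + T → a % L < B → b / L ≤ a / L := by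
    intro a b hab hba ha
    have hda := Nat.div_add_mod a L
    have hb : b < L * (a / L + 1) := by
      have : L * (a / L + 1) = L * (a / L) + L := by ring
      rw [this]
      have : a % L < B := ha
      omega
    have := Nat.div_lt_of_lt_mul hb
    omega
  rcases le_total t1 t2 with h | h
  · exact le_antisymm (Nat.div_le_div_right h) (key t1 t2 h (by omega) h1)
  · exact le_antisymm (key t2 t1 h (by omega) h2) (Nat.div_le_div_right h)


/-- Martinian–Sundberg converse: any rate-`R = k/n` streaming code with delay `T` correcting
every single-burst pattern of burst length at most `B` per window of length `T+1` satisfies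
`B ≤ T·min(1, (1−R)/R)`, i.e. both `R·B ≤ (1−R)·T` and `B ≤ T`. -/


theorem stmt3 (B T : ℕ) (hB : 0 < B) (hT : 0 < T)
    (F : Type) [Field F] [Fintype F] (k n : ℕ) (hk : 1 ≤ k) (hn : 0 < n)
    (f : Encoder F k n) (g : Decoder F k n T)
    (hcorr : ∀ E ∈ BurstChannel B T, Corrects f g E) :
    ((k : ℝ) / n) * B ≤ (1 - (k : ℝ) / n) * T ∧ B ≤ T := by
  classical
  have hq : 1 < Fintype.card F := Fintype.one_lt_card
  -- Part 1: B ≤ T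
  have hBT : B ≤ T := by
    by_contra hcon
    push_neg at hcon
    have hE0 : Set.Ico 0 B ∈ BurstChannel B T := by
      intro j; exact ⟨0, fun t ht => by simpa using ht.1⟩
    have h0 := hcorr _ hE0 (fun _ _ => (0 : F)) 0
    have h1 := hcorr _ hE0 (fun _ _ => (1 : F)) 0
    have heq : (fun t : Fin (0 + T + 1) => chOutput f (Set.Ico 0 B) (fun _ _ => (0 : F)) t)
        = (fun t : Fin (0 + T + 1) => chOutput f (Set.Ico 0 B) (fun _ _ => (1 : F)) t) := by
      funext t
      have ht : (t : ℕ) < B := by have := t.isLt; omega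
      simp [chOutput, Set.mem_Ico, ht]
    rw [heq, h1] at h0
    have := congrFun h0 ⟨0, hk⟩
    exact zero_ne_one this.symm
  -- Part 2: the periodic erasure pattern
  set L := B + T with hLdef
  have hL : 0 < L := by omega
  set E : Set ℕ := {i | i % L < B} with hEdef
  have hE : E ∈ BurstChannel B T := by
    intro j
    by_cases hne : (E ∩ Set.Icc j (j + T)).Nonempty
    · obtain ⟨t0, ht0E, ht0w⟩ := hne
      refine ⟨t0 / L * L, fun t ht => ?_⟩
      obtain ⟨htE, htw⟩ := ht
      have hdiv : t / L = t0 / L :=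
        same_burst htE ht0E htw.1 htw.2 ht0w.1 ht0w.2
      constructor
      · rw [← hdiv]; exact Nat.div_mul_le_self t L
      · rw [← hdiv]
        have hda := Nat.div_add_mod t L
        have : t / L * L = L * (t / L) := mul_comm _ _
        have htE' : t % L < B := htE
        omega
    · exact ⟨0, fun t ht => absurd ⟨t, ht⟩ hne⟩
  -- counting lemma
  have key : ∀ m : ℕ, k * (m * L) ≤ n * ((m + 1) * T) := by
    intro m
    set N := m * L with hNdef
    set M := m * L + T with hMdef
    set S : Finset ℕ := (Finset.range M).filter (fun t => ¬ t % L < B) with hSdef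
    -- |S| ≤ (m+1)*T
    have hScard : S.card ≤ (m + 1) * T := by
      have : S.card ≤ (Finset.range ((m + 1) * T)).card := by
        apply Finset.card_le_card_of_injOn (fun t => t / L * T + (t % L - B))
        · intro t htS
          simp only [hSdef, Finset.mem_coe, Finset.mem_filter, Finset.mem_range, not_lt] at htS
          obtain ⟨htM, htB⟩ := htS
          have hmod : t % L < L := Nat.mod_lt _ hL
          have hdm : t / L < m + 1 := by
            apply Nat.div_lt_of_lt_mul
            have : L * (m + 1) = m * L + L := by ring
            omega
          simp only [Finset.mem_coe, Finset.mem_range]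
          calc t / L * T + (t % L - B) < t / L * T + T := by omega
            _ = (t / L + 1) * T := by ring
            _ ≤ (m + 1) * T := Nat.mul_le_mul_right _ (by omega)
        · intro t1 h1 t2 h2 heq
          simp only [hSdef, Finset.mem_coe, Finset.mem_filter, Finset.mem_range, not_lt] at h1 h2
          have hm1 : t1 % L < L := Nat.mod_lt _ hL
          have hm2 : t2 % L < L := Nat.mod_lt _ hL
          have hr1 : t1 % L - B < T := by omega
          have hr2 : t2 % L - B < T := by omega
          have heq' : t1 / L * T + (t1 % L - B) = t2 / L * T + (t2 % L - B) := by
            simpa using heq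
          have hd : t1 / L = t2 / L := by
            have d1 := eu_div T (t1 / L) (t1 % L - B) hT hr1
            have d2 := eu_div T (t2 / L) (t2 % L - B) hT hr2
            rw [← d1, ← d2, heq']
          have hr : t1 % L - B = t2 % L - B := by
            have d1 := eu_mod T (t1 / L) (t1 % L - B) hr1
            have d2 := eu_mod T (t2 / L) (t2 % L - B) hr2
            rw [← d1, ← d2, heq']
          have b1 : B ≤ t1 % L := h1.2
          have b2 : B ≤ t2 % L := h2.2
          have hmodeq : t1 % L = t2 % L := by omega
          have e1 := Nat.div_add_mod t1 L
          have e2 := Nat.div_add_mod t2 L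
          have : L * (t1 / L) = L * (t2 / L) := by rw [hd]
          omega
      simpa using this
    -- the injection from source prefixes to unerased symbols
    let ext : (Fin N → Fin k → F) → ℕ → Fin k → F :=
      fun u j => if h : j < N then u ⟨j, h⟩ else 0
    let Φ : (Fin N → Fin k → F) → (↥S → Fin n → F) :=
      fun u t => chInput f (ext u) t.val
    have hΦ : Function.Injective Φ := by
      intro u1 u2 h
      funext i
      have c1 := hcorr E hE (ext u1) i
      have c2 := hcorr E hE (ext u2) i
      have hobs : (fun t : Fin (↑i + T + 1) => chOutput f E (ext u1) t)
          = (fun t : Fin (↑i + T + 1) => chOutput f E (ext u2) t) := by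
        funext t
        by_cases hmem : (t : ℕ) ∈ E
        · simp [chOutput, hmem]
        · have hmem' : ¬ (t : ℕ) % L < B := hmem
          have htS : (t : ℕ) ∈ S := by
            simp only [hSdef, Finset.mem_filter, Finset.mem_range]
            refine ⟨?_, hmem'⟩
            have := t.isLt
            have := i.isLt
            omega
          have := congrFun h ⟨(t : ℕ), htS⟩
          simp only [chOutput, hmem, if_false]
          simpa [Φ, chInput] using this
      rw [hobs] at c1
      rw [c1] at c2
      have hi : (i : ℕ) < N := i.isLt
      have e1 : ext u1 ↑i = u1 i := by simp [ext, hi]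
      have e2 : ext u2 ↑i = u2 i := by simp [ext, hi]
      rw [e1, e2] at c2
      exact c2
    have hcard := Fintype.card_le_of_injective Φ hΦ
    simp only [Fintype.card_fun, Fintype.card_coe, Fintype.card_fin, ← pow_mul] at hcard
    have hkN : k * N ≤ n * S.card := by
      have h2 : Fintype.card F ^ (k * N) ≤ Fintype.card F ^ (n * S.card) := by
        convert hcard using 2 <;> ring
      exact (Nat.pow_le_pow_iff_right hq).mp h2
    calc k * (m * L) = k * N := by rw [hNdef]
      _ ≤ n * S.card := hkN
      _ ≤ n * ((m + 1) * T) := Nat.mul_le_mul_left _ hScard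
  -- derive k * L ≤ n * T
  have hmain : k * L ≤ n * T := by
    by_contra hcon
    push_neg at hcon
    set b := n * T with hb
    have hkey := key (b + 1)
    have h1 : (b + 1) * (k * L) ≤ (b + 2) * b := by
      calc (b + 1) * (k * L) = k * ((b + 1) * L) := by ring
        _ ≤ n * ((b + 1 + 1) * T) := hkey
        _ = (b + 2) * b := by rw [hb]; ring
    nlinarith
  refine ⟨?_, hBT⟩
  -- real arithmetic conclusion
  have hn' : (0 : ℝ) < n := by exact_mod_cast hn
  have hmainR : (k : ℝ) * (B + T) ≤ n * T := by exact_mod_cast hmain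
  have hkB : (k : ℝ) * B ≤ ((n : ℝ) - k) * T := by nlinarith
  have e : (1 : ℝ) - (k : ℝ) / n = ((n : ℝ) - k) / n := by field_simp
  rw [e, div_mul_eq_mul_div, div_mul_eq_mul_div, div_le_div_iff₀ hn' hn']
  nlinarith
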